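/- Let γ₀ > 0 be a real number and let f : ℕ → ℝ be positive on all naturals ≥ 1. Suppose that for every natural number x ≥ 2, (∏_{k=1}^{x−1} f(k)/(γ₀ + f(k))) · γ₀/(γ₀ + f(x)) = (∏_{k=1}^{x−2} f(k)/(γ₀ + f(k))) · (γ₀/(γ₀ + f(x−1))) · (f(x−1)/(γ₀ + f(x−1) + f(1))). Then f(x) = x · f(1) for every natural number x ≥ 1. -/

import Mathlib

theorem stmt_7 (γ₀ : ℝ) (hγ : 0 < γ₀) (f : ℕ → ℝ) (hf : ∀ k : ℕ, 1 ≤ k → 0 < f k)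
    (h : ∀ x : ℕ, 2 ≤ x →
      (∏ k ∈ Finset.Icc 1 (x - 1), f k / (γ₀ + f k)) * (γ₀ / (γ₀ + f x))
        = (∏ k ∈ Finset.Icc 1 (x - 2), f k / (γ₀ + f k)) * (γ₀ / (γ₀ + f (x - 1)))
            * (f (x - 1) / (γ₀ + f (x - 1) + f 1))) :
    ∀ x : ℕ, 1 ≤ x → f x = (x : ℝ) * f 1 := by
  have key : ∀ y : ℕ, f (y + 2) = f (y + 1) + f 1 := by
    intro y
    have hx := h (y + 2) (by omega)
    simp only [show y + 2 - 1 = y + 1 from rfl, show y + 2 - 2 = y from rfl] at hx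
    have hsplit : (∏ k ∈ Finset.Icc 1 (y + 1), f k / (γ₀ + f k))
        = (∏ k ∈ Finset.Icc 1 y, f k / (γ₀ + f k)) * (f (y + 1) / (γ₀ + f (y + 1))) := by
      rw [Finset.prod_Icc_succ_top (by omega)]
    have hP : 0 < ∏ k ∈ Finset.Icc 1 y, f k / (γ₀ + f k) := by
      apply Finset.prod_pos
      intro k hk
      have hk1 : 1 ≤ k := (Finset.mem_Icc.mp hk).1
      exact div_pos (hf k hk1) (by linarith [hf k hk1])
    rw [hsplit] at hx
    have h1 : 0 < f 1 := hf 1 le_rfl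
    have h2 : 0 < f (y + 1) := hf (y + 1) (by omega)
    have h3 : 0 < f (y + 2) := hf (y + 2) (by omega)
    have hx' : (∏ k ∈ Finset.Icc 1 y, f k / (γ₀ + f k)) *
          ((f (y + 1) / (γ₀ + f (y + 1))) * (γ₀ / (γ₀ + f (y + 2))))
        = (∏ k ∈ Finset.Icc 1 y, f k / (γ₀ + f k)) *
          ((γ₀ / (γ₀ + f (y + 1))) * (f (y + 1) / (γ₀ + f (y + 1) + f 1))) := by
      linear_combination hx
    have hc := mul_left_cancel₀ (ne_of_gt hP) hx'
    have d1 : γ₀ + f (y + 1) ≠ 0 := by positivity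
    have d2 : γ₀ + f (y + 2) ≠ 0 := by positivity
    have d3 : γ₀ + f (y + 1) + f 1 ≠ 0 := by positivity
    field_simp at hc
    have hc' : (γ₀ * f (y + 1) * (γ₀ + f (y + 1))) * (γ₀ + f (y + 1) + f 1)
        = (γ₀ * f (y + 1) * (γ₀ + f (y + 1))) * (γ₀ + f (y + 2)) := by
      linear_combination (γ₀ * f (y + 1) * (γ₀ + f (y + 1))) * hc
    have := mul_left_cancel₀ (by positivity : γ₀ * f (y + 1) * (γ₀ + f (y + 1)) ≠ 0) hc'
    linarith
  intro x hx
  induction x with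
  | zero => omega
  | succ n ih =>
    rcases Nat.lt_or_ge n 1 with hn | hn
    · interval_cases n
      · simp
    · have := ih hn
      obtain ⟨m, rfl⟩ : ∃ m, n = m + 1 := ⟨n - 1, by omega⟩
      rw [key m, this]
      push_cast
      ring
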